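/- The one-dimensional transverse intersection product μ on the enlarged complex EC_N is associative: for all x, y, z ∈ EC_N, μ(μ(x, y), z) = μ(x, μ(y, z)). -/

import Mathlib

/-- Basis elements of the one-dimensional enlarged complex of period `N`:
points `P a`, elemental sticks `S a` (the interval `[a, a+1]`), and
infinitesimal sticks `I a`. -/
inductive B (N : ℕ) : Type where
  | P : ZMod N → B N
  | S : ZMod N → B N
  | I : ZMod N → B N
  deriving DecidableEq

/-- The enlarged one-dimensional chain complex: the free ℚ-vector space on `B N`. -/
abbrev EC (N : ℕ) : Type := B N →₀ ℚ

namespace B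

variable {N : ℕ}

/-- Codimension: 1 for points, 0 for sticks and infinitesimal sticks. -/
def cod : B N → ℕ
  | P _ => 1
  | _ => 0

/-- Basis element viewed in `EC N`. -/
noncomputable def e (u : B N) : EC N := Finsupp.single u 1

/-- The transverse intersection product on basis elements. -/
noncomputable def muB : B N → B N → EC N
  | P _, P _ => 0
  | P a, S b => if b = a ∨ b = a - 1 then Finsupp.single (P a) (1/2) else 0
  | S b, P a => if b = a ∨ b = a - 1 then Finsupp.single (P a) (1/2) else 0
  | P a, I b => if b = a then Finsupp.single (P a) (1/4) else 0
  | I b, P a => if b = a then Finsupp.single (P a) (1/4) else 0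
  | S a, S b =>
      if b = a then
        Finsupp.single (I a) (-1) + Finsupp.single (S a) 1 + Finsupp.single (I (a+1)) (-1)
      else if b = a + 1 then Finsupp.single (I (a+1)) 1
      else if b = a - 1 then Finsupp.single (I a) 1
      else 0
  | S a, I b => if b = a ∨ b = a + 1 then Finsupp.single (I b) (1/2) else 0
  | I b, S a => if b = a ∨ b = a + 1 then Finsupp.single (I b) (1/2) else 0
  | I a, I b => if b = a then Finsupp.single (I a) (1/4) else 0

/-- Boundary on basis elements: `∂ (S a) = P (a+1) - P a`, zero otherwise. -/
noncomputable def bdB : B N → EC N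
  | S a => Finsupp.single (P (a+1)) 1 - Finsupp.single (P a) 1
  | _ => 0

/-- Augmentation on basis elements. -/
def epsB : B N → ℚ
  | P _ => 1
  | _ => 0

end B

/-- Bilinear extension of the basis product to `EC N`. -/
noncomputable def mu {N : ℕ} (x y : EC N) : EC N :=
  x.sum fun u cu => y.sum fun v cv => (cu * cv) • B.muB u v

/-- Linear extension of the boundary to `EC N`. -/
noncomputable def bd {N : ℕ} (x : EC N) : EC N := x.sum fun u cu => cu • B.bdB u

/-- Augmentation `ε : EC N → ℚ`. -/
noncomputable def eps {N : ℕ} (x : EC N) : ℚ := x.sum fun u cu => cu * B.epsB u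

/-- The augmentation pairing `⟨x, y⟩ = ε (μ x y)`. -/
noncomputable def pair {N : ℕ} (x y : EC N) : ℚ := eps (mu x y)

/-- The subcomplex `C_N` spanned by points and elemental sticks. -/
noncomputable def Csub (N : ℕ) : Submodule ℚ (EC N) :=
  Submodule.span ℚ
    (Set.range (fun a : ZMod N => Finsupp.single (B.P a) (1 : ℚ)) ∪
     Set.range (fun a : ZMod N => Finsupp.single (B.S a) (1 : ℚ)))


section AssocAux

variable {N : ℕ}

lemma mu_zero_left (y : EC N) : mu 0 y = 0 := by simp [mu]

lemma mu_zero_right (x : EC N) : mu x 0 = 0 := by simp [mu]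

lemma mu_single_left (u : B N) (c : ℚ) (y : EC N) :
    mu (Finsupp.single u c) y = y.sum fun v cv => (c * cv) • B.muB u v := by
  unfold mu
  apply Finsupp.sum_single_index
  simp

lemma mu_single_single (u v : B N) (c d : ℚ) :
    mu (Finsupp.single u c) (Finsupp.single v d) = (c * d) • B.muB u v := by
  rw [mu_single_left]
  apply Finsupp.sum_single_index
  simp

lemma mu_add_left (x x' y : EC N) : mu (x + x') y = mu x y + mu x' y := by
  unfold mu
  rw [Finsupp.sum_add_index'] <;> intros <;> simp [add_mul, add_smul, Finsupp.sum_add]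

lemma mu_add_right (x y y' : EC N) : mu x (y + y') = mu x y + mu x y' := by
  unfold mu
  rw [← Finsupp.sum_add]
  apply Finsupp.sum_congr
  intro u _
  rw [Finsupp.sum_add_index'] <;> intros <;> simp [mul_add, add_smul]

lemma mu_smul_left (c : ℚ) (x y : EC N) : mu (c • x) y = c • mu x y := by
  unfold mu
  rw [Finsupp.sum_smul_index', Finsupp.smul_sum]
  · apply Finsupp.sum_congr
    intro u _
    rw [Finsupp.smul_sum]
    apply Finsupp.sum_congr
    intro v _
    simp [smul_smul, mul_assoc]
  · intro u; simp

lemma mu_smul_right (c : ℚ) (x y : EC N) : mu x (c • y) = c • mu x y := by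
  unfold mu
  rw [Finsupp.smul_sum]
  apply Finsupp.sum_congr
  intro u _
  rw [Finsupp.sum_smul_index', Finsupp.smul_sum]
  · apply Finsupp.sum_congr
    intro v _
    simp [smul_smul, mul_assoc, mul_left_comm]
  · intro v; simp

lemma sing (u : B N) (c : ℚ) : (Finsupp.single u c : EC N) = c • B.e u := by
  simp [B.e, Finsupp.smul_single]

set_option maxHeartbeats 4000000 in
lemma assoc_basis (hN : 3 ≤ N) (u v w : B N) :
    mu (B.muB u v) (Finsupp.single w 1) = mu (Finsupp.single u 1) (B.muB v w) := by
  have h1 : (1 : ZMod N) ≠ 0 := by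
    have h : ((1 : ℕ) : ZMod N) ≠ 0 := by
      rw [Ne, ZMod.natCast_eq_zero_iff]
      intro h
      have := Nat.le_of_dvd (by norm_num) h
      omega
    simpa using h
  have h2 : (2 : ZMod N) ≠ 0 := by
    have h : ((2 : ℕ) : ZMod N) ≠ 0 := by
      rw [Ne, ZMod.natCast_eq_zero_iff]
      intro h
      have := Nat.le_of_dvd (by norm_num) h
      omega
    simpa using h
  have f1 : ∀ x : ZMod N, ¬ (x + 1 = x) := fun x h => h1 (by linear_combination h)
  have f2 : ∀ x : ZMod N, ¬ (x = x + 1) := fun x h => h1 (by linear_combination -h)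
  have f3 : ∀ x : ZMod N, ¬ (x - 1 = x) := fun x h => h1 (by linear_combination -h)
  have f4 : ∀ x : ZMod N, ¬ (x = x - 1) := fun x h => h1 (by linear_combination h)
  have f5 : ∀ x : ZMod N, ¬ (x + 1 = x - 1) := fun x h => h2 (by linear_combination h)
  have f6 : ∀ x : ZMod N, ¬ (x - 1 = x + 1) := fun x h => h2 (by linear_combination -h)
  have f7 : ∀ x : ZMod N, ¬ (x + 1 + 1 = x) := fun x h => h2 (by linear_combination h)
  have f8 : ∀ x : ZMod N, ¬ (x = x + 1 + 1) := fun x h => h2 (by linear_combination -h)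
  have g1 : ∀ x : ZMod N, ¬ (x = x - 1 - 1) := fun x h => h2 (by linear_combination h)
  have g2 : ∀ x : ZMod N, ¬ (x - 1 - 1 = x) := fun x h => h2 (by linear_combination -h)
  rcases u with a | a | a <;> rcases v with b | b | b <;> rcases w with c | c | c
  all_goals (
    simp only [B.muB, mu_single_single, mu_add_left, mu_add_right, mu_zero_left,
      mu_zero_right, one_mul, mul_one, smul_add, smul_zero, zero_add, add_zero,
      sub_add_cancel, add_sub_cancel_right, add_left_inj, f1, f2, f3, f4, f5, f6, f7, f8,
      h1, h2, or_self, or_false, false_or, if_true, if_false, not_true, not_false_iff]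
    try split_ifs
    all_goals subst_vars
    all_goals (try simp only [B.muB, mu_single_single, mu_add_left, mu_add_right, mu_zero_left,
      mu_zero_right, one_mul, mul_one, smul_add, smul_zero, zero_add, add_zero,
      sub_add_cancel, add_sub_cancel_right, add_left_inj, f1, f2, f3, f4, f5, f6, f7, f8,
      h1, h2, or_self, or_false, false_or, if_true, if_false, not_true, not_false_iff])
    all_goals try split_ifs
    all_goals subst_vars
    all_goals try (casesm* _ ∨ _)
    all_goals subst_vars
    all_goals try (simp only [add_left_inj, sub_left_inj, sub_add_cancel,
      add_sub_cancel_right] at *)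
    all_goals subst_vars
    all_goals (
      first
        | rfl
        | (simp only [sing, smul_smul, smul_add, smul_zero, smul_neg] <;> module)
        | (simp only [f1, f2, f3, f4, f5, f6, f7, f8, g1, g2, h1, h2, not_or,
            sub_add_cancel, add_sub_cancel_right, add_left_inj, eq_self_iff_true,
            not_true, not_false_iff, and_false, false_and] at *; done)
        | tauto))

end AssocAux
/-- the one-dimensional transverse intersection product is associative. -/
theorem mu_assoc (N : ℕ) (hN : 3 ≤ N) :
    ∀ x y z : EC N, mu (mu x y) z = mu x (mu y z) := by
  have key : ∀ (u v w : B N) (c d k : ℚ),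
      mu (mu (Finsupp.single u c) (Finsupp.single v d)) (Finsupp.single w k)
        = mu (Finsupp.single u c) (mu (Finsupp.single v d) (Finsupp.single w k)) := by
    intro u v w c d k
    rw [mu_single_single, mu_single_single, sing w k, sing u c]
    simp only [mu_smul_left, mu_smul_right]
    rw [show mu (B.muB u v) (B.e w) = mu (B.e u) (B.muB v w) from assoc_basis hN u v w]
    module
  intro x y z
  induction x using Finsupp.induction_linear with
  | zero => simp [mu_zero_left]
  | add f g hf hg => simp [mu_add_left, hf, hg]
  | single u c =>
    induction y using Finsupp.induction_linear with
    | zero => simp [mu_zero_left, mu_zero_right]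
    | add f g hf hg => simp [mu_add_left, mu_add_right, hf, hg]
    | single v d =>
      induction z using Finsupp.induction_linear with
      | zero => simp [mu_zero_right]
      | add f g hf hg => simp [mu_add_right, hf, hg]
      | single w k => exact key u v w c d k
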